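/- Let f : ℝ^m → ℝ^m be a C¹ diffeomorphism that has the Lipschitz shadowing property with constants 𝓛, d₀ > 0. Let p : ℤ → ℝ^m be a complete trajectory of f (i.e. p_{k+1} = f(p_k) for all k ∈ ℤ) and set A_k = Df(p_k). Assume there is a constant N > 0 with ‖A_k‖ ≤ N and ‖A_k⁻¹‖ ≤ N for all k ∈ ℤ, and that f is uniformly differentiable along the trajectory: for every μ > 0 there exists δ > 0 such that for all k ∈ ℤ and all v ∈ ℝ^m with ‖v‖ ≤ δ one has ‖f(p_k + v) − p_{k+1} − A_k v‖ ≤ μ‖v‖. Then B⁺(𝒜) + B⁻(𝒜) = ℝ^m, where 𝒜 = {A_k}, i.e. every vector of ℝ^m is the sum of a vector of B⁺(𝒜) and a vector of B⁻(𝒜). -/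

import Mathlib

open Filter Topology

/-- Transition map `Φ(k,l)` for `k = l + n`, `n ≥ 0`:
`Φ(l+n+1, l) = A_{l+n} ∘ Φ(l+n, l)`. -/
noncomputable def PhiPos {m : ℕ}
    (A : ℤ → (EuclideanSpace ℝ (Fin m) ≃L[ℝ] EuclideanSpace ℝ (Fin m))) (l : ℤ) :
    ℕ → (EuclideanSpace ℝ (Fin m) →L[ℝ] EuclideanSpace ℝ (Fin m))
  | 0 => 1
  | n + 1 =>
      ((A (l + n) : EuclideanSpace ℝ (Fin m) →L[ℝ] EuclideanSpace ℝ (Fin m))).comp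
        (PhiPos A l n)

/-- Transition map `Φ(k,l)` for `l = k + n`, `n ≥ 0`:
`Φ(k, k+n+1) = Φ(k, k+n) ∘ A_{k+n}⁻¹`. -/
noncomputable def PhiNeg {m : ℕ}
    (A : ℤ → (EuclideanSpace ℝ (Fin m) ≃L[ℝ] EuclideanSpace ℝ (Fin m))) (k : ℤ) :
    ℕ → (EuclideanSpace ℝ (Fin m) →L[ℝ] EuclideanSpace ℝ (Fin m))
  | 0 => 1
  | n + 1 =>
      (PhiNeg A k n).comp
        (((A (k + n)).symm : EuclideanSpace ℝ (Fin m) →L[ℝ] EuclideanSpace ℝ (Fin m)))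

/-- The transition maps `Φ(k,l)`: `Φ(k,l) = A_{k-1} ∘ ⋯ ∘ A_l` for `l < k`,
`Φ(k,k) = Id`, and `Φ(k,l) = A_k⁻¹ ∘ ⋯ ∘ A_{l-1}⁻¹` for `l > k`. -/
noncomputable def Phi {m : ℕ}
    (A : ℤ → (EuclideanSpace ℝ (Fin m) ≃L[ℝ] EuclideanSpace ℝ (Fin m))) (k l : ℤ) :
    EuclideanSpace ℝ (Fin m) →L[ℝ] EuclideanSpace ℝ (Fin m) :=
  if l ≤ k then PhiPos A l (k - l).toNat else PhiNeg A k (l - k).toNat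

/-- `B⁺(𝒜) = {v : ‖Φ(k,0)v‖ → 0 as k → +∞}`. -/
def Bplus {m : ℕ}
    (A : ℤ → (EuclideanSpace ℝ (Fin m) ≃L[ℝ] EuclideanSpace ℝ (Fin m))) :
    Set (EuclideanSpace ℝ (Fin m)) :=
  {v | Tendsto (fun k : ℤ => ‖Phi A k 0 v‖) atTop (𝓝 0)}

/-- `B⁻(𝒜) = {v : ‖Φ(k,0)v‖ → 0 as k → -∞}`. -/
def Bminus {m : ℕ}
    (A : ℤ → (EuclideanSpace ℝ (Fin m) ≃L[ℝ] EuclideanSpace ℝ (Fin m))) :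
    Set (EuclideanSpace ℝ (Fin m)) :=
  {v | Tendsto (fun k : ℤ => ‖Phi A k 0 v‖) atBot (𝓝 0)}

/-- `f` has the Lipschitz shadowing property with constants `L`, `d₀`: every
`d`-pseudotrajectory with `0 < d ≤ d₀` is `L·d`-shadowed by a complete trajectory of `f`. -/
def LipschitzShadowing {m : ℕ} (f : EuclideanSpace ℝ (Fin m) → EuclideanSpace ℝ (Fin m))
    (L d₀ : ℝ) : Prop :=
  ∀ d : ℝ, 0 < d → d ≤ d₀ →
    ∀ x : ℤ → EuclideanSpace ℝ (Fin m),
      (∀ k : ℤ, ‖x (k + 1) - f (x k)‖ < d) →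
      ∃ q : ℤ → EuclideanSpace ℝ (Fin m),
        (∀ k : ℤ, q (k + 1) = f (q k)) ∧ ∀ k : ℤ, ‖x k - q k‖ ≤ L * d

section PhiLemmas
variable {m : ℕ} (A : ℤ → (EuclideanSpace ℝ (Fin m) ≃L[ℝ] EuclideanSpace ℝ (Fin m)))

local notation "E" => EuclideanSpace ℝ (Fin m)

lemma phiNeg_comp (k : ℤ) (n : ℕ) :
    ((A k : E →L[ℝ] E)).comp (PhiNeg A k (n+1)) = PhiNeg A (k+1) n := by
  induction n generalizing k with
  | zero =>
      ext x
      simp [PhiNeg]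
  | succ n ih =>
      have h1 : PhiNeg A k (n+2) = (PhiNeg A k (n+1)).comp
          (((A (k + (n+1:ℕ))).symm : E →L[ℝ] E)) := rfl
      have h2 : PhiNeg A (k+1) (n+1) = (PhiNeg A (k+1) n).comp
          (((A ((k+1) + (n:ℕ))).symm : E →L[ℝ] E)) := rfl
      rw [h1, h2, ← ContinuousLinearMap.comp_assoc, ih]
      congr 2
      push_cast
      ring

lemma phi_zero : Phi A 0 0 = 1 := by
  simp [Phi, PhiPos]

lemma phi_succ (k : ℤ) :
    Phi A (k+1) 0 = ((A k : E →L[ℝ] E)).comp (Phi A k 0) := by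
  rcases le_or_gt 0 k with hk | hk
  · have h1 : Phi A (k+1) 0 = PhiPos A 0 ((k+1).toNat) := by
      rw [Phi, if_pos (by omega)]
      congr 1
      omega
    have h2 : Phi A k 0 = PhiPos A 0 k.toNat := by
      rw [Phi, if_pos hk]
      congr 1
      omega
    have h3 : (k+1).toNat = k.toNat + 1 := by omega
    have harg : (0:ℤ) + (k.toNat:ℤ) = k := by omega
    have hdef : PhiPos A 0 (k.toNat+1)
        = ((A ((0:ℤ) + (k.toNat:ℤ)) : E →L[ℝ] E)).comp (PhiPos A 0 k.toNat) := rfl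
    rw [h1, h2, h3, hdef, harg]
  · -- k < 0, so k + 1 ≤ 0
    have h2 : Phi A k 0 = PhiNeg A k ((-k).toNat) := by
      rw [Phi, if_neg (by omega)]
      congr 1
      omega
    have h4 : (-k).toNat = (-(k+1)).toNat + 1 := by omega
    have h5 : ((A k : E →L[ℝ] E)).comp (PhiNeg A k ((-(k+1)).toNat + 1))
        = PhiNeg A (k+1) ((-(k+1)).toNat) := phiNeg_comp A k _
    rw [h2, h4, h5]
    rcases eq_or_lt_of_le (by omega : k + 1 ≤ 0) with he | hlt
    · rw [he]
      have : (-(k+1)).toNat = 0 := by omega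
      rw [he] at this
      rw [this]
      simp [Phi, PhiPos, PhiNeg]
    · rw [Phi, if_neg (by omega)]
      congr 1
      omega

lemma phi_succ_apply (k : ℤ) (x : E) :
    Phi A (k+1) 0 x = A k (Phi A k 0 x) := by
  rw [phi_succ]; rfl

lemma phi_pred_apply (k : ℤ) (x : E) :
    Phi A k 0 x = (A k).symm (Phi A (k+1) 0 x) := by
  rw [phi_succ_apply]; simp

lemma sol_rep (h : ℤ → E) (hh : ∀ k, h (k+1) = A k (h k)) :
    ∀ k, h k = Phi A k 0 (h 0) := by
  intro k
  induction k using Int.induction_on with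
  | zero => simp [phi_zero]
  | succ i ih => rw [hh, ih, phi_succ_apply]
  | pred i ih =>
      have h1 : h (-(i:ℤ)) = A (-(i:ℤ)-1) (h (-(i:ℤ)-1)) := by
        have := hh (-(i:ℤ)-1); rwa [sub_add_cancel] at this
      have h2 : Phi A (-(i:ℤ)) 0 (h 0) = A (-(i:ℤ)-1) (Phi A (-(i:ℤ)-1) 0 (h 0)) := by
        have := phi_succ_apply A (-(i:ℤ)-1) (h 0); rwa [sub_add_cancel] at this
      rw [ih, h2] at h1
      exact (A _).injective h1.symm

lemma phi_injective (k : ℤ) : Function.Injective (Phi A k 0) := by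
  induction k using Int.induction_on with
  | zero => rw [phi_zero]; exact fun a b h => h
  | succ i ih =>
      intro a b hab
      rw [phi_succ_apply, phi_succ_apply] at hab
      exact ih ((A _).injective hab)
  | pred i ih =>
      intro a b hab
      apply ih
      have ha := phi_pred_apply A (-(i:ℤ)-1) a
      have hb := phi_pred_apply A (-(i:ℤ)-1) b
      rw [sub_add_cancel] at ha hb
      rw [hab] at ha
      exact (A _).symm.injective (ha.symm.trans hb)

lemma phi_ne_zero (k : ℤ) {x : E} (hx : x ≠ 0) : Phi A k 0 x ≠ 0 := by
  intro h
  exact hx (phi_injective A k (by simpa using h))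

end PhiLemmas


section BS
variable {m : ℕ} (A : ℤ → (EuclideanSpace ℝ (Fin m) ≃L[ℝ] EuclideanSpace ℝ (Fin m)))
variable (P : ℤ → (EuclideanSpace ℝ (Fin m) →L[ℝ] EuclideanSpace ℝ (Fin m)))

local notation "E" => EuclideanSpace ℝ (Fin m)

/-- The subspace of initial values of bounded complete solutions. -/
def fullBdd : Submodule ℝ (EuclideanSpace ℝ (Fin m)) where
  carrier := {x | ∃ M : ℝ, ∀ k : ℤ, ‖P k x‖ ≤ M}
  add_mem' := by
    rintro a b ⟨Ma, hMa⟩ ⟨Mb, hMb⟩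
    exact ⟨Ma + Mb, fun k => by
      calc ‖P k (a + b)‖ = ‖P k a + P k b‖ := by rw [map_add]
      _ ≤ ‖P k a‖ + ‖P k b‖ := norm_add_le _ _
      _ ≤ Ma + Mb := add_le_add (hMa k) (hMb k)⟩
  zero_mem' := ⟨0, fun k => by simp⟩
  smul_mem' := by
    rintro c a ⟨Ma, hMa⟩
    refine ⟨|c| * Ma, fun k => ?_⟩
    have h0 : (0:ℝ) ≤ ‖P k a‖ := norm_nonneg _
    calc ‖P k (c • a)‖ = |c| * ‖P k a‖ := by rw [map_smul, norm_smul, Real.norm_eq_abs]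
    _ ≤ |c| * Ma := by
        apply mul_le_mul_of_nonneg_left (hMa k) (abs_nonneg c)

lemma exists_KB : ∃ K : ℝ, 0 ≤ K ∧ ∀ x : E, (∃ M : ℝ, ∀ k : ℤ, ‖P k x‖ ≤ M) →
    ∀ k : ℤ, ‖P k x‖ ≤ K * ‖x‖ := by
  haveI : CompleteSpace (fullBdd P) := FiniteDimensional.complete ℝ _
  set S := fullBdd P
  set g : ℤ → (S →L[ℝ] E) := fun k => (P k).comp (S.subtypeL) with hg
  have hpt : ∀ x : S, ∃ C, ∀ k : ℤ, ‖g k x‖ ≤ C := by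
    rintro ⟨x, M, hM⟩
    exact ⟨M, fun k => hM k⟩
  obtain ⟨K, hK⟩ := banach_steinhaus hpt
  refine ⟨max K 0, le_max_right _ _, ?_⟩
  rintro x hx k
  have : ‖g k ⟨x, hx⟩‖ ≤ ‖g k‖ * ‖(⟨x, hx⟩ : S)‖ := (g k).le_opNorm _
  calc ‖P k x‖ = ‖g k ⟨x, hx⟩‖ := rfl
  _ ≤ ‖g k‖ * ‖x‖ := this
  _ ≤ max K 0 * ‖x‖ := by
      apply mul_le_mul_of_nonneg_right (le_trans (hK k) (le_max_left _ _)) (norm_nonneg x)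
end BS


section Core
variable {m : ℕ}

local notation "E" => EuclideanSpace ℝ (Fin m)

set_option maxHeartbeats 1000000 in
lemma core_admissibility
    (f : E → E) (L d₀ : ℝ) (hL : 0 < L) (hd₀ : 0 < d₀)
    (hshadow : LipschitzShadowing f L d₀)
    (p : ℤ → E) (hp : ∀ k : ℤ, p (k + 1) = f (p k))
    (A : ℤ → (E ≃L[ℝ] E)) (N : ℝ) (hN : 0 < N)
    (hAbound : ∀ k : ℤ, ‖(A k : E →L[ℝ] E)‖ ≤ N)
    (hunif : ∀ μ : ℝ, 0 < μ → ∃ δ : ℝ, 0 < δ ∧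
      ∀ k : ℤ, ∀ v : E, ‖v‖ ≤ δ →
        ‖f (p k + v) - p (k + 1) - A k v‖ ≤ μ * ‖v‖)
    (w : ℤ → E) (hw : ∀ k : ℤ, ‖w k‖ ≤ 1) (a : ℤ) (hsupp : ∀ k ≤ a, w k = 0) :
    ∃ u : ℤ → E, (∀ k : ℤ, u (k+1) = A k (u k) + w (k+1)) ∧ ∀ k : ℤ, ‖u k‖ ≤ 2*L := by
  classical
  -- the nonlinear perturbed pseudotrajectories
  set X : ℝ → ℕ → E := fun δ => fun i => Nat.rec (p a) (fun i xi => f xi + δ • w (a + i + 1)) i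
    with hX
  set x : ℝ → ℤ → E := fun δ k => if k ≤ a then p k else X δ (k - a).toNat with hxdef
  have hxk : ∀ δ : ℝ, ∀ k : ℤ, a ≤ k → x δ k = X δ (k - a).toNat := by
    intro δ k hk
    rcases eq_or_lt_of_le hk with he | hlt
    · rw [hxdef]
      simp only [← he, if_pos le_rfl, sub_self, Int.toNat_zero]
      rfl
    · rw [hxdef]
      simp only [if_neg (by omega : ¬ k ≤ a)]
  have hxle : ∀ δ : ℝ, ∀ k : ℤ, k ≤ a → x δ k = p k := by
    intro δ k hk
    rw [hxdef]; simp only [if_pos hk]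
  have hXsucc : ∀ δ : ℝ, ∀ i : ℕ, X δ (i+1) = f (X δ i) + δ • w (a + i + 1) := by
    intro δ i; rfl
  have xrec : ∀ δ : ℝ, ∀ k : ℤ, x δ (k+1) = f (x δ k) + δ • w (k+1) := by
    intro δ k
    rcases le_or_gt (k+1) a with hk | hk
    · rw [hxle δ _ hk, hxle δ _ (by omega), hsupp _ hk, smul_zero, add_zero, hp]
    · have hka : a ≤ k := by omega
      rw [hxk δ _ (by omega), hxk δ _ hka]
      have h1 : (k + 1 - a).toNat = (k - a).toNat + 1 := by omega
      rw [h1, hXsucc]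
      have h2 : a + ((k - a).toNat : ℤ) + 1 = k + 1 := by omega
      rw [h2]
  -- the linearized inhomogeneous solution z with z = 0 left of a
  set Z : ℕ → E := fun i => Nat.rec (0 : E) (fun i zi => A (a + i) zi + w (a + i + 1)) i with hZ
  set z : ℤ → E := fun k => if k ≤ a then 0 else Z (k - a).toNat with hzdef
  have hzk : ∀ k : ℤ, a ≤ k → z k = Z (k - a).toNat := by
    intro k hk
    rcases eq_or_lt_of_le hk with he | hlt
    · rw [hzdef]
      simp only [← he, if_pos le_rfl, sub_self, Int.toNat_zero]
      rfl
    · rw [hzdef]; simp only [if_neg (by omega : ¬ k ≤ a)]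
  have hzle : ∀ k : ℤ, k ≤ a → z k = 0 := by
    intro k hk; rw [hzdef]; simp only [if_pos hk]
  have zrec : ∀ k : ℤ, z (k+1) = A k (z k) + w (k+1) := by
    intro k
    rcases le_or_gt (k+1) a with hk | hk
    · rw [hzle _ hk, hzle _ (by omega), hsupp _ hk, map_zero, zero_add]
    · have hka : a ≤ k := by omega
      rw [hzk _ (by omega), hzk _ hka]
      have h1 : (k + 1 - a).toNat = (k - a).toNat + 1 := by omega
      rw [h1]
      show A (a + ((k - a).toNat : ℤ)) (Z (k - a).toNat) + w (a + ((k - a).toNat : ℤ) + 1) = _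
      have h2 : a + ((k - a).toNat : ℤ) = k := by omega
      rw [h2]
  -- Step 3 : deterministic limit (x δ k - p k)/δ → z k
  have claim3 : ∀ k : ℤ, ∀ ε : ℝ, 0 < ε → ∃ δb : ℝ, 0 < δb ∧ ∀ δ : ℝ, 0 < δ → δ ≤ δb →
      ‖x δ k - p k - δ • z k‖ ≤ ε * δ := by
    have trivial_case : ∀ k : ℤ, k ≤ a → ∀ ε : ℝ, 0 < ε → ∃ δb : ℝ, 0 < δb ∧
        ∀ δ : ℝ, 0 < δ → δ ≤ δb → ‖x δ k - p k - δ • z k‖ ≤ ε * δ := by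
      intro k hk ε hε
      refine ⟨1, one_pos, fun δ hδ _ => ?_⟩
      rw [hxle δ _ hk, hzle _ hk, smul_zero, sub_self, sub_zero, norm_zero]
      positivity
    have main : ∀ k : ℤ, a ≤ k → ∀ ε : ℝ, 0 < ε → ∃ δb : ℝ, 0 < δb ∧
        ∀ δ : ℝ, 0 < δ → δ ≤ δb → ‖x δ k - p k - δ • z k‖ ≤ ε * δ := by
      refine Int.le_induction (trivial_case a le_rfl) ?_
      intro k hak ih ε' hε'
      set ε : ℝ := min 1 (ε' / (2*N)) with hε
      have hεpos : 0 < ε := lt_min one_pos (by positivity)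
      obtain ⟨δb1, hδb1pos, hδb1⟩ := ih ε hεpos
      set μ : ℝ := ε' / (2*(‖z k‖ + 1)) with hμ
      have hμpos : 0 < μ := by positivity
      obtain ⟨δμ, hδμpos, hδμ⟩ := hunif μ hμpos
      refine ⟨min δb1 (δμ / (‖z k‖ + 1)), lt_min hδb1pos (by positivity), ?_⟩
      intro δ hδ hδle
      have hδ1 : δ ≤ δb1 := le_trans hδle (min_le_left _ _)
      have hδ2 : δ ≤ δμ / (‖z k‖ + 1) := le_trans hδle (min_le_right _ _)
      have hIH := hδb1 δ hδ hδ1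
      set v : E := x δ k - p k with hv
      have hxv : p k + v = x δ k := by rw [hv]; abel
      have hvz : ‖v - δ • z k‖ ≤ ε * δ := hIH
      have hvnorm : ‖v‖ ≤ δ * (‖z k‖ + 1) := by
        have : ‖v‖ ≤ ‖δ • z k‖ + ‖v - δ • z k‖ := by
          have := norm_add_le (δ • z k) (v - δ • z k)
          simpa using this
        have h2 : ‖δ • z k‖ = δ * ‖z k‖ := by
          rw [norm_smul, Real.norm_eq_abs, abs_of_pos hδ]
        have h3 : ε * δ ≤ 1 * δ :=
          mul_le_mul_of_nonneg_right (le_trans (min_le_left _ _) le_rfl) hδ.le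
        nlinarith [hvz]
      have hvδμ : ‖v‖ ≤ δμ := by
        have hmul : δ * (‖z k‖ + 1) ≤ δμ := by
          rw [le_div_iff₀ (by positivity)] at hδ2
          linarith
        linarith
      have key : x δ (k+1) - p (k+1) - δ • z (k+1)
          = (f (p k + v) - p (k+1) - A k v) + (A k (v - δ • z k)) := by
        rw [xrec, zrec, hxv]
        simp only [map_sub, map_smul, smul_add]
        abel
      rw [key]
      have h1 : ‖f (p k + v) - p (k+1) - A k v‖ ≤ μ * ‖v‖ := hδμ k v hvδμ
      have h2 : ‖(A k : E →L[ℝ] E) (v - δ • z k)‖ ≤ N * (ε * δ) := by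
        calc ‖(A k : E →L[ℝ] E) (v - δ • z k)‖
            ≤ ‖(A k : E →L[ℝ] E)‖ * ‖v - δ • z k‖ := (A k : E →L[ℝ] E).le_opNorm _
        _ ≤ N * (ε * δ) := mul_le_mul (hAbound k) hvz (norm_nonneg _) hN.le
      have h3 : μ * ‖v‖ ≤ (ε'/2) * δ := by
        calc μ * ‖v‖ ≤ μ * (δ * (‖z k‖ + 1)) :=
              mul_le_mul_of_nonneg_left hvnorm hμpos.le
        _ = (ε'/2) * δ := by rw [hμ]; field_simp
      have h4 : N * (ε * δ) ≤ (ε'/2) * δ := by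
        have hε2 : ε ≤ ε' / (2*N) := min_le_right _ _
        calc N * (ε * δ) ≤ N * ((ε' / (2*N)) * δ) := by
              apply mul_le_mul_of_nonneg_left (mul_le_mul_of_nonneg_right hε2 hδ.le) hN.le
        _ = (ε'/2) * δ := by field_simp
      calc ‖(f (p k + v) - p (k+1) - A k v) + (A k (v - δ • z k))‖
          ≤ ‖f (p k + v) - p (k+1) - A k v‖ + ‖(A k : E →L[ℝ] E) (v - δ • z k)‖ :=
            norm_add_le _ _
      _ ≤ (ε'/2) * δ + (ε'/2) * δ := add_le_add (le_trans h1 h3) (le_trans h2 h4)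
      _ = ε' * δ := by ring
    intro k
    rcases le_or_gt k a with hk | hk
    · exact trivial_case k hk
    · exact main k hk.le
  -- scale sequence
  set d : ℕ → ℝ := fun i => min d₀ (1/((i:ℝ)+1)) with hd
  have hdpos : ∀ i : ℕ, 0 < d i := by
    intro i; simp only [hd]; exact lt_min hd₀ (by positivity)
  have hdle : ∀ i : ℕ, d i ≤ d₀ := by
    intro i; simp only [hd]; exact min_le_left _ _
  have hδpos : ∀ i : ℕ, 0 < d i / 2 := fun i => by linarith [hdpos i]
  have hdsmall : ∀ t : ℝ, 0 < t → ∀ᶠ i in (atTop : Filter ℕ), d i ≤ t := by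
    intro t ht
    obtain ⟨n, hn⟩ := exists_nat_gt (1/t)
    refine Filter.eventually_atTop.2 ⟨n, fun i hi => ?_⟩
    have h1 : (1:ℝ)/t < (i:ℝ) + 1 := by
      have : (n:ℝ) ≤ (i:ℝ) := by exact_mod_cast hi
      linarith
    have h2 : (1:ℝ)/((i:ℝ)+1) ≤ t := by
      rw [div_le_iff₀ (by positivity)]
      rw [div_lt_iff₀ ht] at h1
      nlinarith [ht, h1]
    calc d i ≤ 1/((i:ℝ)+1) := by simp only [hd]; exact min_le_right _ _
    _ ≤ t := h2
  -- shadowing trajectories for the perturbed pseudotrajectories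
  have hqex : ∀ i : ℕ, ∃ q : ℤ → E, (∀ k : ℤ, q (k+1) = f (q k)) ∧
      ∀ k : ℤ, ‖x (d i/2) k - q k‖ ≤ L * d i := by
    intro i
    apply hshadow (d i) (hdpos i) (hdle i)
    intro k
    have hx1 : x (d i/2) (k+1) - f (x (d i/2) k) = (d i/2) • w (k+1) := by
      rw [xrec]; abel
    rw [hx1, norm_smul, Real.norm_eq_abs, abs_of_pos (hδpos i)]
    calc (d i/2) * ‖w (k+1)‖ ≤ (d i/2) * 1 :=
          mul_le_mul_of_nonneg_left (hw _) (hδpos i).le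
    _ < d i := by linarith [hdpos i]
  choose q hq1 hq2 using hqex
  set g : ℤ → ℕ → E := fun k i => (d i/2)⁻¹ • (q i k - p k) with hg
  set U : Ultrafilter ℕ := Ultrafilter.of atTop with hUdef
  have hU : (U : Filter ℕ) ≤ (atTop : Filter ℕ) := Ultrafilter.of_le atTop
  -- eventual closeness of g to z
  have hbdd : ∀ k : ℤ, ∀ ε : ℝ, 0 < ε → ∀ᶠ i in (atTop : Filter ℕ),
      ‖g k i - z k‖ ≤ 2*L + ε := by
    intro k ε hε
    obtain ⟨δb, hδbpos, hδb⟩ := claim3 k ε hε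
    filter_upwards [hdsmall (2*δb) (by positivity)] with i hi
    have hne : (d i/2) ≠ 0 := ne_of_gt (hδpos i)
    have h2 := hδb (d i/2) (hδpos i) (by linarith)
    have key : g k i - z k = (d i/2)⁻¹ •
        ((q i k - x (d i/2) k) + (x (d i/2) k - p k - (d i/2) • z k)) := by
      have hcomb : (q i k - x (d i/2) k) + (x (d i/2) k - p k - (d i/2) • z k)
          = (q i k - p k) - (d i/2) • z k := by abel
      rw [hcomb, smul_sub, smul_smul, inv_mul_cancel₀ hne, one_smul]
    rw [key, norm_smul, Real.norm_eq_abs, abs_of_pos (inv_pos.2 (hδpos i))]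
    have hsum : ‖(q i k - x (d i/2) k) + (x (d i/2) k - p k - (d i/2) • z k)‖
        ≤ L * d i + ε * (d i/2) := by
      calc ‖(q i k - x (d i/2) k) + (x (d i/2) k - p k - (d i/2) • z k)‖
          ≤ ‖q i k - x (d i/2) k‖ + ‖x (d i/2) k - p k - (d i/2) • z k‖ := norm_add_le _ _
      _ ≤ L * d i + ε * (d i/2) := by
          have h3 : ‖q i k - x (d i/2) k‖ = ‖x (d i/2) k - q i k‖ := norm_sub_rev _ _
          rw [h3]
          exact add_le_add (hq2 i k) h2
    calc (d i/2)⁻¹ * ‖(q i k - x (d i/2) k) + (x (d i/2) k - p k - (d i/2) • z k)‖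
        ≤ (d i/2)⁻¹ * (L * d i + ε * (d i/2)) :=
          mul_le_mul_of_nonneg_left hsum (inv_nonneg.2 (hδpos i).le)
    _ = 2*L + ε := by
        have : d i ≠ 0 := ne_of_gt (hdpos i)
        field_simp
  -- existence of ultrafilter limits
  have hvex : ∀ k : ℤ, ∃ vk : E, Tendsto (g k) (U : Filter ℕ) (𝓝 vk) := by
    intro k
    have hev : ∀ᶠ i in (atTop : Filter ℕ),
        g k i ∈ Metric.closedBall (0:E) (‖z k‖ + (2*L + 1)) := by
      filter_upwards [hbdd k 1 one_pos] with i hi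
      rw [Metric.mem_closedBall, dist_zero_right]
      calc ‖g k i‖ ≤ ‖z k‖ + ‖g k i - z k‖ := by
            have h4 := norm_add_le (z k) (g k i - z k)
            simpa using h4
      _ ≤ ‖z k‖ + (2*L + 1) := by linarith
    have hle : Filter.map (g k) (U : Filter ℕ) ≤ 𝓟 (Metric.closedBall (0:E) (‖z k‖ + (2*L + 1))) :=
      le_principal_iff.2 (Filter.mem_map.2 (hU hev))
    obtain ⟨vk, _, hvk⟩ := (isCompact_closedBall (0:E) (‖z k‖ + (2*L + 1))).ultrafilter_le_nhds
      (U.map (g k)) (by rwa [Ultrafilter.coe_map])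
    refine ⟨vk, ?_⟩
    rw [Ultrafilter.coe_map] at hvk
    exact hvk
  choose v hv using hvex
  -- the limit is 2L-close to z
  have hvz2 : ∀ k : ℤ, ‖v k - z k‖ ≤ 2*L := by
    intro k
    have htend : Tendsto (fun i => ‖g k i - z k‖) (U : Filter ℕ) (𝓝 ‖v k - z k‖) :=
      ((hv k).sub tendsto_const_nhds).norm
    refine le_of_forall_pos_le_add ?_
    intro ε hε
    exact le_of_tendsto htend ((hbdd k ε hε).filter_mono hU)
  have hRk : ∀ k : ℤ, ∀ᶠ i in (atTop : Filter ℕ), ‖g k i‖ ≤ ‖z k‖ + 2*L + 1 := by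
    intro k
    filter_upwards [hbdd k 1 one_pos] with i hi
    have h4 := norm_add_le (z k) (g k i - z k)
    simp only [add_sub_cancel] at h4
    linarith
  -- the limit is a homogeneous solution
  have hom : ∀ k : ℤ, v (k+1) = A k (v k) := by
    intro k
    have hRpos : (0:ℝ) < ‖z k‖ + 2*L + 1 := by
      have := norm_nonneg (z k); linarith
    have hkey : ∀ μ : ℝ, 0 < μ → ‖v (k+1) - A k (v k)‖ ≤ μ * (‖z k‖ + 2*L + 1) := by
      intro μ hμ
      obtain ⟨δμ, hδμpos, hδμ⟩ := hunif μ hμ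
      have htend : Tendsto (fun i => ‖g (k+1) i - A k (g k i)‖) (U : Filter ℕ)
          (𝓝 ‖v (k+1) - A k (v k)‖) := by
        have h1 : Tendsto (fun i => A k (g k i)) (U : Filter ℕ) (𝓝 (A k (v k))) :=
          ((A k).continuous.tendsto _).comp (hv k)
        exact ((hv (k+1)).sub h1).norm
      apply le_of_tendsto htend
      have hev : ∀ᶠ i in (atTop : Filter ℕ),
          ‖g (k+1) i - A k (g k i)‖ ≤ μ * (‖z k‖ + 2*L + 1) := by
        filter_upwards [hRk k, hdsmall (2*δμ/(‖z k‖ + 2*L + 1)) (by positivity)] with i hgb hdi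
        have hne : (d i/2) ≠ 0 := ne_of_gt (hδpos i)
        have hqnorm : ‖q i k - p k‖ = (d i/2) * ‖g k i‖ := by
          have hqg : q i k - p k = (d i/2) • g k i := by
            simp only [hg]
            rw [smul_inv_smul₀ hne]
          rw [hqg, norm_smul, Real.norm_eq_abs, abs_of_pos (hδpos i)]
        have hqp : ‖q i k - p k‖ ≤ δμ := by
          rw [hqnorm]
          calc (d i/2) * ‖g k i‖ ≤ (d i/2) * (‖z k‖ + 2*L + 1) :=
                mul_le_mul_of_nonneg_left hgb (hδpos i).le
          _ ≤ δμ := by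
              rw [le_div_iff₀ hRpos] at hdi
              linarith
        have happ := hδμ k (q i k - p k) hqp
        have hfq : p k + (q i k - p k) = q i k := by abel
        rw [hfq, ← hq1 i k] at happ
        have hgid : g (k+1) i - A k (g k i)
            = (d i/2)⁻¹ • (q i (k+1) - p (k+1) - A k (q i k - p k)) := by
          simp only [hg, map_sub, map_smul, smul_sub]
        rw [hgid, norm_smul, Real.norm_eq_abs, abs_of_pos (inv_pos.2 (hδpos i))]
        calc (d i/2)⁻¹ * ‖q i (k+1) - p (k+1) - A k (q i k - p k)‖
            ≤ (d i/2)⁻¹ * (μ * ‖q i k - p k‖) :=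
              mul_le_mul_of_nonneg_left happ (inv_nonneg.2 (hδpos i).le)
        _ = μ * ‖g k i‖ := by
            rw [hqnorm]
            have hdi0 : d i ≠ 0 := (hdpos i).ne'
            field_simp
        _ ≤ μ * (‖z k‖ + 2*L + 1) := mul_le_mul_of_nonneg_left hgb hμ.le
      exact hev.filter_mono hU
    have hnorm : ‖v (k+1) - A k (v k)‖ ≤ 0 := by
      by_contra hcon
      push_neg at hcon
      have hc := hkey (‖v (k+1) - A k (v k)‖ / (2*(‖z k‖ + 2*L + 1))) (by positivity)
      have heq : ‖v (k+1) - A k (v k)‖ / (2*(‖z k‖ + 2*L + 1)) * (‖z k‖ + 2*L + 1)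
          = ‖v (k+1) - A k (v k)‖ / 2 := by
        field_simp
      rw [heq] at hc
      linarith
    have h0 : v (k+1) - A k (v k) = 0 := norm_le_zero_iff.1 hnorm
    have := sub_eq_zero.1 h0
    exact this
  -- conclusion
  refine ⟨fun k => z k - v k, ?_, ?_⟩
  · intro k
    show z (k+1) - v (k+1) = A k (z k - v k) + w (k+1)
    rw [zrec, hom, map_sub]
    abel
  · intro k
    show ‖z k - v k‖ ≤ 2*L
    calc ‖z k - v k‖ = ‖v k - z k‖ := norm_sub_rev _ _
    _ ≤ 2*L := hvz2 k

end Core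

section Decay
variable {m : ℕ}

local notation "E" => EuclideanSpace ℝ (Fin m)

lemma decay_forward (A : ℤ → (E ≃L[ℝ] E)) (C : ℝ) (hC : 0 ≤ C)
    (hadm : ∀ w : ℤ → E, (∀ k : ℤ, ‖w k‖ ≤ 1) → ∀ a : ℤ, (∀ k ≤ a, w k = 0) →
      ∃ u : ℤ → E, (∀ k : ℤ, u (k+1) = A k (u k) + w (k+1)) ∧ ∀ k : ℤ, ‖u k‖ ≤ C)
    (x : E) (M : ℝ) (hM : ∀ k : ℤ, 0 ≤ k → ‖Phi A k 0 x‖ ≤ M) :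
    Tendsto (fun k : ℤ => ‖Phi A k 0 x‖) atTop (𝓝 0) := by
  by_cases hx : x = 0
  · subst hx
    simp only [map_zero, norm_zero]
    exact tendsto_const_nhds
  have apos : ∀ j : ℤ, 0 < ‖Phi A j 0 x‖ := fun j => norm_pos_iff.2 (phi_ne_zero A j hx)
  have hMpos : 0 < M := lt_of_lt_of_le (by simpa [phi_zero] using apos 0) (hM 0 le_rfl)
  obtain ⟨K, hK0, hK⟩ := exists_KB (fun k => Phi A k 0)
  -- key estimate at time n
  have key : ∀ n : ℕ, 1 ≤ n → ‖Phi A (n:ℤ) 0 x‖ ≤ (C + K * C) * M / (n:ℝ) := by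
    intro n hn
    set w : ℤ → E := fun j => if 1 ≤ j ∧ j ≤ (n:ℤ) then (1/‖Phi A j 0 x‖) • (Phi A j 0 x) else 0
      with hwdef
    have hw : ∀ j : ℤ, ‖w j‖ ≤ 1 := by
      intro j
      simp only [hwdef]
      split
      · rw [norm_smul, Real.norm_eq_abs, abs_of_pos (one_div_pos.2 (apos j))]
        rw [one_div, inv_mul_cancel₀ (apos j).ne']
      · simp
    have hsupp : ∀ k ≤ (0:ℤ), w k = 0 := by
      intro k hk
      simp only [hwdef]
      rw [if_neg (by omega)]
    obtain ⟨u, hu1, hu2⟩ := hadm w hw 0 hsupp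
    set S : ℤ → ℝ := fun k => ∑ i ∈ Finset.range (min k (n:ℤ)).toNat, 1/‖Phi A ((i:ℤ)+1) 0 x‖
      with hSdef
    set vv : ℤ → E := fun k => S k • Phi A k 0 x with hvvdef
    have hSnonneg : ∀ k : ℤ, 0 ≤ S k := by
      intro k
      simp only [hSdef]
      apply Finset.sum_nonneg
      intro i _
      positivity
    set Sfull : ℝ := ∑ i ∈ Finset.range n, 1/‖Phi A ((i:ℤ)+1) 0 x‖ with hSfull
    have hSle : ∀ k : ℤ, S k ≤ Sfull := by
      intro k
      simp only [hSdef, hSfull]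
      apply Finset.sum_le_sum_of_subset_of_nonneg
      · apply Finset.range_subset_range.2
        omega
      · intro i _ _
        positivity
    have vrec : ∀ k : ℤ, vv (k+1) = A k (vv k) + w (k+1) := by
      intro k
      have hAk : A k (vv k) = S k • Phi A (k+1) 0 x := by
        simp only [hvvdef, map_smul, phi_succ_apply]
      simp only [hvvdef]
      rw [hAk]
      rcases le_or_gt (k+1) 0 with hk1 | hk1
      · have h1 : S (k+1) = S k := by
          simp only [hSdef]
          rw [show (min (k+1) (n:ℤ)).toNat = (min k (n:ℤ)).toNat from by omega]
        rw [h1]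
        simp only [hwdef]
        rw [if_neg (by omega), add_zero]
      · rcases le_or_gt (k+1) (n:ℤ) with hk2 | hk2
        · have h1 : (min (k+1) (n:ℤ)).toNat = (min k (n:ℤ)).toNat + 1 := by omega
          have h2 : S (k+1) = S k + 1/‖Phi A (k+1) 0 x‖ := by
            simp only [hSdef]
            rw [h1, Finset.sum_range_succ,
              show (((min k (n:ℤ)).toNat : ℕ) : ℤ) = k from by omega]
          rw [h2, add_smul]
          simp only [hwdef]
          rw [if_pos ⟨by omega, hk2⟩]
        · have h1 : S (k+1) = S k := by
            simp only [hSdef]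
            rw [show (min (k+1) (n:ℤ)).toNat = (min k (n:ℤ)).toNat from by omega]
          rw [h1]
          simp only [hwdef]
          rw [if_neg (by omega), add_zero]
    -- h is a bounded complete homogeneous solution
    set h : ℤ → E := fun k => vv k - u k with hhdef
    have hhom : ∀ k : ℤ, h (k+1) = A k (h k) := by
      intro k
      simp only [hhdef]
      rw [vrec, hu1, map_sub]
      abel
    have hrep : ∀ k : ℤ, h k = Phi A k 0 (h 0) := sol_rep A h hhom
    have hvv0 : vv 0 = 0 := by
      simp only [hvvdef, hSdef]
      norm_num
    have hh0 : ‖h 0‖ ≤ C := by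
      simp only [hhdef]
      rw [hvv0, zero_sub, norm_neg]
      exact hu2 0
    have hhb : ∃ Mh : ℝ, ∀ k : ℤ, ‖Phi A k 0 (h 0)‖ ≤ Mh := by
      refine ⟨Sfull * M + C, fun k => ?_⟩
      rw [← hrep]
      have hvk : ‖vv k‖ ≤ Sfull * M := by
        rcases le_or_gt 0 k with hk | hk
        · simp only [hvvdef]
          rw [norm_smul, Real.norm_eq_abs, abs_of_nonneg (hSnonneg k)]
          have := mul_le_mul (hSle k) (hM k hk) (norm_nonneg _) (le_trans (hSnonneg 0) (hSle 0))
          exact this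
        · have : S k = 0 := by
            simp only [hSdef]
            have : (min k (n:ℤ)).toNat = 0 := by omega
            rw [this]
            simp
          simp only [hvvdef]
          rw [this, zero_smul, norm_zero]
          positivity
      calc ‖h k‖ = ‖vv k - u k‖ := rfl
      _ ≤ ‖vv k‖ + ‖u k‖ := norm_sub_le _ _
      _ ≤ Sfull * M + C := add_le_add hvk (hu2 k)
    have hKh : ∀ k : ℤ, ‖Phi A k 0 (h 0)‖ ≤ K * C := by
      intro k
      calc ‖Phi A k 0 (h 0)‖ ≤ K * ‖h 0‖ := hK (h 0) hhb k
      _ ≤ K * C := mul_le_mul_of_nonneg_left hh0 hK0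
    -- the estimate at k = n
    have hSn : (n:ℝ) / M ≤ S (n:ℤ) := by
      have hterm : ∀ i ∈ Finset.range n, 1/M ≤ 1/‖Phi A ((i:ℤ)+1) 0 x‖ := by
        intro i _
        apply one_div_le_one_div_of_le (apos _)
        exact hM _ (by positivity)
      have hsum := Finset.sum_le_sum hterm
      rw [Finset.sum_const, Finset.card_range] at hsum
      have hSn2 : S (n:ℤ) = ∑ i ∈ Finset.range n, 1/‖Phi A ((i:ℤ)+1) 0 x‖ := by
        simp only [hSdef]
        rw [show (min (n:ℤ) (n:ℤ)).toNat = n from by omega]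
      rw [hSn2]
      calc (n:ℝ)/M = (n:ℕ) • (1/M : ℝ) := by
            rw [nsmul_eq_mul]
            ring
      _ ≤ _ := hsum
    have hvn : S (n:ℤ) * ‖Phi A (n:ℤ) 0 x‖ ≤ C + K * C := by
      have h1 : ‖vv (n:ℤ)‖ = S (n:ℤ) * ‖Phi A (n:ℤ) 0 x‖ := by
        simp only [hvvdef]
        rw [norm_smul, Real.norm_eq_abs, abs_of_nonneg (hSnonneg _)]
      have h2 : ‖vv (n:ℤ)‖ ≤ ‖u (n:ℤ)‖ + ‖h (n:ℤ)‖ := by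
        have : vv (n:ℤ) = u (n:ℤ) + h (n:ℤ) := by
          simp only [hhdef]
          abel
        rw [this]
        exact norm_add_le _ _
      rw [h1] at h2
      calc S (n:ℤ) * ‖Phi A (n:ℤ) 0 x‖ ≤ ‖u (n:ℤ)‖ + ‖h (n:ℤ)‖ := h2
      _ ≤ C + K * C := by
          apply add_le_add (hu2 _)
          rw [hrep]
          exact hKh _
    -- conclude
    have hnM : (0:ℝ) < (n:ℝ) := by exact_mod_cast hn
    have hchain : ((n:ℝ)/M) * ‖Phi A (n:ℤ) 0 x‖ ≤ C + K * C := by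
      calc ((n:ℝ)/M) * ‖Phi A (n:ℤ) 0 x‖ ≤ S (n:ℤ) * ‖Phi A (n:ℤ) 0 x‖ :=
            mul_le_mul_of_nonneg_right hSn (norm_nonneg _)
      _ ≤ C + K * C := hvn
    rw [le_div_iff₀ hnM]
    rw [div_mul_eq_mul_div, div_le_iff₀ hMpos] at hchain
    calc ‖Phi A (n:ℤ) 0 x‖ * (n:ℝ) = (n:ℝ) * ‖Phi A (n:ℤ) 0 x‖ := mul_comm _ _
    _ ≤ (C + K * C) * M := hchain
  -- assemble the limit
  have hev : ∀ᶠ k : ℤ in atTop, ‖Phi A k 0 x‖ ≤ ((C + K * C) * M) / (k:ℝ) := by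
    refine Filter.eventually_atTop.2 ⟨1, fun k hk => ?_⟩
    have hkn : ((k.toNat : ℕ) : ℤ) = k := by omega
    have hkey := key k.toNat (by omega)
    rw [hkn] at hkey
    have hc2 : ((k.toNat : ℕ) : ℝ) = ((k : ℤ) : ℝ) := by exact_mod_cast congrArg (fun t : ℤ => (t : ℝ)) hkn
    rw [hc2] at hkey
    exact hkey
  apply squeeze_zero' (Filter.Eventually.of_forall (fun k => norm_nonneg _)) hev
  have h1 : Tendsto (fun k : ℤ => (k:ℝ)) atTop atTop := tendsto_intCast_atTop_atTop
  have h2 : Tendsto (fun k : ℤ => ((k:ℝ))⁻¹) atTop (𝓝 0) := h1.inv_tendsto_atTop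
  have h3 := h2.const_mul ((C + K * C) * M)
  simp only [mul_zero] at h3
  simpa [div_eq_mul_inv] using h3

lemma decay_backward (A : ℤ → (E ≃L[ℝ] E)) (C : ℝ) (hC : 0 ≤ C)
    (hadm : ∀ w : ℤ → E, (∀ k : ℤ, ‖w k‖ ≤ 1) → ∀ a : ℤ, (∀ k ≤ a, w k = 0) →
      ∃ u : ℤ → E, (∀ k : ℤ, u (k+1) = A k (u k) + w (k+1)) ∧ ∀ k : ℤ, ‖u k‖ ≤ C)
    (x : E) (M : ℝ) (hM : ∀ k : ℤ, k ≤ 0 → ‖Phi A k 0 x‖ ≤ M) :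
    Tendsto (fun k : ℤ => ‖Phi A k 0 x‖) atBot (𝓝 0) := by
  by_cases hx : x = 0
  · subst hx
    simp only [map_zero, norm_zero]
    exact tendsto_const_nhds
  have apos : ∀ j : ℤ, 0 < ‖Phi A j 0 x‖ := fun j => norm_pos_iff.2 (phi_ne_zero A j hx)
  have hMpos : 0 < M := lt_of_lt_of_le (by simpa [phi_zero] using apos 0) (hM 0 le_rfl)
  obtain ⟨K, hK0, hK⟩ := exists_KB (fun k => Phi A k 0)
  have key : ∀ n : ℕ, 1 ≤ n → ‖Phi A (-(n:ℤ)) 0 x‖ ≤ (C + K * C) * M / (n:ℝ) := by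
    intro n hn
    set w : ℤ → E := fun j => if -(n:ℤ)+1 ≤ j ∧ j ≤ 0
        then (1/‖Phi A j 0 x‖) • (Phi A j 0 x) else 0 with hwdef
    have hw : ∀ j : ℤ, ‖w j‖ ≤ 1 := by
      intro j
      simp only [hwdef]
      split
      · rw [norm_smul, Real.norm_eq_abs, abs_of_pos (one_div_pos.2 (apos j))]
        rw [one_div, inv_mul_cancel₀ (apos j).ne']
      · simp
    have hsupp : ∀ k ≤ (-(n:ℤ)), w k = 0 := by
      intro k hk
      simp only [hwdef]
      rw [if_neg (by omega)]
    obtain ⟨u, hu1, hu2⟩ := hadm w hw (-(n:ℤ)) hsupp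
    set S : ℤ → ℝ := fun k => ∑ i ∈ Finset.range (min (-k) (n:ℤ)).toNat, 1/‖Phi A (-(i:ℤ)) 0 x‖
      with hSdef
    set vv : ℤ → E := fun k => (-(S k)) • Phi A k 0 x with hvvdef
    have hSnonneg : ∀ k : ℤ, 0 ≤ S k := by
      intro k
      simp only [hSdef]
      apply Finset.sum_nonneg
      intro i _
      positivity
    set Sfull : ℝ := ∑ i ∈ Finset.range n, 1/‖Phi A (-(i:ℤ)) 0 x‖ with hSfull
    have hSle : ∀ k : ℤ, S k ≤ Sfull := by
      intro k
      simp only [hSdef, hSfull]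
      apply Finset.sum_le_sum_of_subset_of_nonneg
      · apply Finset.range_subset_range.2
        omega
      · intro i _ _
        positivity
    have vrec : ∀ k : ℤ, vv (k+1) = A k (vv k) + w (k+1) := by
      intro k
      have hAk : A k (vv k) = (-(S k)) • Phi A (k+1) 0 x := by
        simp only [hvvdef, map_smul, phi_succ_apply]
      simp only [hvvdef]
      rw [hAk]
      rcases le_or_gt 0 k with hk1 | hk1
      · have h1 : S (k+1) = S k := by
          simp only [hSdef]
          rw [show (min (-(k+1)) (n:ℤ)).toNat = (min (-k) (n:ℤ)).toNat from by omega]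
        rw [h1]
        simp only [hwdef]
        rw [if_neg (by omega), add_zero]
      · rcases le_or_gt (-(n:ℤ)) k with hk2 | hk2
        · have h1 : (min (-k) (n:ℤ)).toNat = (min (-(k+1)) (n:ℤ)).toNat + 1 := by omega
          have h2 : S k = S (k+1) + 1/‖Phi A (k+1) 0 x‖ := by
            simp only [hSdef]
            rw [h1, Finset.sum_range_succ,
              show -(((min (-(k+1)) (n:ℤ)).toNat : ℕ) : ℤ) = k+1 from by omega]
          rw [h2]
          simp only [hwdef]
          rw [if_pos (⟨by omega, by omega⟩ : -(n:ℤ)+1 ≤ k+1 ∧ k+1 ≤ 0)]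
          module
        · have h1 : S (k+1) = S k := by
            simp only [hSdef]
            rw [show (min (-(k+1)) (n:ℤ)).toNat = (min (-k) (n:ℤ)).toNat from by omega]
          rw [h1]
          simp only [hwdef]
          rw [if_neg (by omega), add_zero]
    set h : ℤ → E := fun k => vv k - u k with hhdef
    have hhom : ∀ k : ℤ, h (k+1) = A k (h k) := by
      intro k
      simp only [hhdef]
      rw [vrec, hu1, map_sub]
      abel
    have hrep : ∀ k : ℤ, h k = Phi A k 0 (h 0) := sol_rep A h hhom
    have hvv0 : vv 0 = 0 := by
      simp only [hvvdef, hSdef]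
      norm_num
    have hh0 : ‖h 0‖ ≤ C := by
      simp only [hhdef]
      rw [hvv0, zero_sub, norm_neg]
      exact hu2 0
    have hhb : ∃ Mh : ℝ, ∀ k : ℤ, ‖Phi A k 0 (h 0)‖ ≤ Mh := by
      refine ⟨Sfull * M + C, fun k => ?_⟩
      rw [← hrep]
      have hvk : ‖vv k‖ ≤ Sfull * M := by
        rcases le_or_gt k 0 with hk | hk
        · simp only [hvvdef]
          rw [norm_smul, Real.norm_eq_abs, abs_neg, abs_of_nonneg (hSnonneg k)]
          exact mul_le_mul (hSle k) (hM k hk) (norm_nonneg _) (le_trans (hSnonneg 0) (hSle 0))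
        · have hS0 : S k = 0 := by
            simp only [hSdef]
            rw [show (min (-k) (n:ℤ)).toNat = 0 from by omega]
            simp
          simp only [hvvdef]
          rw [hS0, neg_zero, zero_smul, norm_zero]
          positivity
      calc ‖h k‖ = ‖vv k - u k‖ := rfl
      _ ≤ ‖vv k‖ + ‖u k‖ := norm_sub_le _ _
      _ ≤ Sfull * M + C := add_le_add hvk (hu2 k)
    have hKh : ∀ k : ℤ, ‖Phi A k 0 (h 0)‖ ≤ K * C := by
      intro k
      calc ‖Phi A k 0 (h 0)‖ ≤ K * ‖h 0‖ := hK (h 0) hhb k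
      _ ≤ K * C := mul_le_mul_of_nonneg_left hh0 hK0
    have hSn : (n:ℝ) / M ≤ S (-(n:ℤ)) := by
      have hterm : ∀ i ∈ Finset.range n, 1/M ≤ 1/‖Phi A (-(i:ℤ)) 0 x‖ := by
        intro i _
        apply one_div_le_one_div_of_le (apos _)
        exact hM _ (by omega)
      have hsum := Finset.sum_le_sum hterm
      rw [Finset.sum_const, Finset.card_range] at hsum
      have hSn2 : S (-(n:ℤ)) = ∑ i ∈ Finset.range n, 1/‖Phi A (-(i:ℤ)) 0 x‖ := by
        simp only [hSdef]
        rw [show (min (-(-(n:ℤ))) (n:ℤ)).toNat = n from by omega]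
      rw [hSn2]
      calc (n:ℝ)/M = (n:ℕ) • (1/M : ℝ) := by
            rw [nsmul_eq_mul]
            ring
      _ ≤ _ := hsum
    have hvn : S (-(n:ℤ)) * ‖Phi A (-(n:ℤ)) 0 x‖ ≤ C + K * C := by
      have h1 : ‖vv (-(n:ℤ))‖ = S (-(n:ℤ)) * ‖Phi A (-(n:ℤ)) 0 x‖ := by
        simp only [hvvdef]
        rw [norm_smul, Real.norm_eq_abs, abs_neg, abs_of_nonneg (hSnonneg _)]
      have h2 : ‖vv (-(n:ℤ))‖ ≤ ‖u (-(n:ℤ))‖ + ‖h (-(n:ℤ))‖ := by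
        have he : vv (-(n:ℤ)) = u (-(n:ℤ)) + h (-(n:ℤ)) := by
          simp only [hhdef]
          abel
        rw [he]
        exact norm_add_le _ _
      rw [h1] at h2
      calc S (-(n:ℤ)) * ‖Phi A (-(n:ℤ)) 0 x‖ ≤ ‖u (-(n:ℤ))‖ + ‖h (-(n:ℤ))‖ := h2
      _ ≤ C + K * C := by
          apply add_le_add (hu2 _)
          rw [hrep]
          exact hKh _
    have hnM : (0:ℝ) < (n:ℝ) := by exact_mod_cast hn
    have hchain : ((n:ℝ)/M) * ‖Phi A (-(n:ℤ)) 0 x‖ ≤ C + K * C := by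
      calc ((n:ℝ)/M) * ‖Phi A (-(n:ℤ)) 0 x‖ ≤ S (-(n:ℤ)) * ‖Phi A (-(n:ℤ)) 0 x‖ :=
            mul_le_mul_of_nonneg_right hSn (norm_nonneg _)
      _ ≤ C + K * C := hvn
    rw [le_div_iff₀ hnM]
    rw [div_mul_eq_mul_div, div_le_iff₀ hMpos] at hchain
    calc ‖Phi A (-(n:ℤ)) 0 x‖ * (n:ℝ) = (n:ℝ) * ‖Phi A (-(n:ℤ)) 0 x‖ := mul_comm _ _
    _ ≤ (C + K * C) * M := hchain
  -- assemble the limit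
  have hev : ∀ᶠ k : ℤ in atBot, ‖Phi A k 0 x‖ ≤ ((C + K * C) * M) / (-(k:ℝ)) := by
    refine Filter.eventually_atBot.2 ⟨-1, fun k hk => ?_⟩
    have hkn : -(((-k).toNat : ℕ) : ℤ) = k := by omega
    have hkey := key (-k).toNat (by omega)
    rw [hkn] at hkey
    have hc2 : (((-k).toNat : ℕ) : ℝ) = -((k : ℤ) : ℝ) := by
      have h3 : (((-k).toNat : ℕ) : ℤ) = -k := by omega
      exact_mod_cast congrArg (fun t : ℤ => (t : ℝ)) h3
    rw [hc2] at hkey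
    exact hkey
  apply squeeze_zero' (Filter.Eventually.of_forall (fun k => norm_nonneg _)) hev
  have h1 : Tendsto (fun k : ℤ => -(k:ℝ)) atBot atTop := by
    have hcast : Tendsto (fun k : ℤ => (k:ℝ)) atBot atBot :=
      tendsto_intCast_atBot_iff.2 tendsto_id
    exact Filter.tendsto_neg_atBot_atTop.comp hcast
  have h2 : Tendsto (fun k : ℤ => (-(k:ℝ))⁻¹) atBot (𝓝 0) := h1.inv_tendsto_atTop
  have h3 := h2.const_mul ((C + K * C) * M)
  simp only [mul_zero] at h3
  simpa [div_eq_mul_inv] using h3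

end Decay

/-- **Main lemma of Pilyugin–Tikhomirov.** If a C¹ diffeomorphism `f` has the Lipschitz
shadowing property, then along any trajectory `{p_k}`, with `A_k = Df(p_k)` uniformly
invertible, the subspaces `B⁺(𝒜)` and `B⁻(𝒜)` are transverse: `B⁺(𝒜) + B⁻(𝒜) = ℝ^m`. -/
theorem transverse_of_lipschitz_shadowing
    {m : ℕ} (f g : EuclideanSpace ℝ (Fin m) → EuclideanSpace ℝ (Fin m))
    (hf : ContDiff ℝ 1 f) (hg : ContDiff ℝ 1 g)
    (hgf : Function.LeftInverse g f) (hfg : Function.RightInverse g f)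
    (L d₀ : ℝ) (hL : 0 < L) (hd₀ : 0 < d₀) (hshadow : LipschitzShadowing f L d₀)
    (p : ℤ → EuclideanSpace ℝ (Fin m)) (hp : ∀ k : ℤ, p (k + 1) = f (p k))
    (A : ℤ → (EuclideanSpace ℝ (Fin m) ≃L[ℝ] EuclideanSpace ℝ (Fin m)))
    (hA : ∀ k : ℤ,
      ((A k : EuclideanSpace ℝ (Fin m) →L[ℝ] EuclideanSpace ℝ (Fin m))) = fderiv ℝ f (p k))
    (N : ℝ) (hN : 0 < N)
    (hAbound : ∀ k : ℤ,
      ‖(A k : EuclideanSpace ℝ (Fin m) →L[ℝ] EuclideanSpace ℝ (Fin m))‖ ≤ N)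
    (hAinvbound : ∀ k : ℤ,
      ‖((A k).symm : EuclideanSpace ℝ (Fin m) →L[ℝ] EuclideanSpace ℝ (Fin m))‖ ≤ N)
    (hunif : ∀ μ : ℝ, 0 < μ → ∃ δ : ℝ, 0 < δ ∧
      ∀ k : ℤ, ∀ v : EuclideanSpace ℝ (Fin m), ‖v‖ ≤ δ →
        ‖f (p k + v) - p (k + 1) - A k v‖ ≤ μ * ‖v‖) :
    ∀ u : EuclideanSpace ℝ (Fin m), ∃ x ∈ Bplus A, ∃ y ∈ Bminus A, u = x + y := by
  have hadm : ∀ w : ℤ → EuclideanSpace ℝ (Fin m), (∀ k : ℤ, ‖w k‖ ≤ 1) →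
      ∀ a : ℤ, (∀ k ≤ a, w k = 0) →
      ∃ u : ℤ → EuclideanSpace ℝ (Fin m),
        (∀ k : ℤ, u (k+1) = A k (u k) + w (k+1)) ∧ ∀ k : ℤ, ‖u k‖ ≤ 2*L :=
    fun w hw a hs =>
      core_admissibility f L d₀ hL hd₀ hshadow p hp A N hN hAbound hunif w hw a hs
  have h2L : (0:ℝ) ≤ 2*L := by linarith
  intro u
  by_cases hu : u = 0
  · refine ⟨0, ?_, 0, ?_, by simp [hu]⟩
    · show Tendsto (fun k : ℤ => ‖Phi A k 0 0‖) atTop (𝓝 0)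
      simp only [map_zero, norm_zero]
      exact tendsto_const_nhds
    · show Tendsto (fun k : ℤ => ‖Phi A k 0 0‖) atBot (𝓝 0)
      simp only [map_zero, norm_zero]
      exact tendsto_const_nhds
  · set c : ℝ := ‖A 0 u‖ with hc
    have hA0u : A 0 u ≠ 0 := by
      intro h
      apply hu
      have := (A 0).injective (h.trans (map_zero (A 0)).symm)
      exact this
    have hcpos : 0 < c := norm_pos_iff.2 hA0u
    set w : ℤ → EuclideanSpace ℝ (Fin m) :=
      fun j => if j = 1 then (1/c) • (A 0 u) else 0 with hwdef
    have hw : ∀ j : ℤ, ‖w j‖ ≤ 1 := by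
      intro j
      simp only [hwdef]
      split
      · rw [norm_smul, Real.norm_eq_abs, abs_of_pos (one_div_pos.2 hcpos), ← hc,
          one_div, inv_mul_cancel₀ hcpos.ne']
      · simp
    have hsupp : ∀ k ≤ (0:ℤ), w k = 0 := by
      intro k hk
      simp only [hwdef]
      rw [if_neg (by omega)]
    obtain ⟨s, hs1, hs2⟩ := hadm w hw 0 hsupp
    have hback : ∀ k : ℤ, k ≤ 0 → s k = Phi A k 0 (s 0) := by
      refine Int.le_induction_down ?_ ?_
      · rw [phi_zero]; rfl
      · intro kk hkk ih
        have hstep : s kk = A (kk-1) (s (kk-1)) + w kk := by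
          have := hs1 (kk-1)
          rwa [sub_add_cancel] at this
        have hw0 : w kk = 0 := hsupp kk hkk
        rw [hw0, add_zero] at hstep
        have hphi : Phi A (kk-1) 0 (s 0) = (A (kk-1)).symm (Phi A kk 0 (s 0)) := by
          have := phi_pred_apply A (kk-1) (s 0)
          rwa [sub_add_cancel] at this
        rw [hphi, ← ih, hstep]
        simp
    have hfwd : ∀ k : ℤ, 1 ≤ k → c • s k = Phi A k 0 (c • s 0 + u) := by
      refine Int.le_induction ?_ ?_
      · have h1 : s 1 = A 0 (s 0) + w 1 := by
          have := hs1 0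
          simpa using this
        have hw1 : w 1 = (1/c) • (A 0 u) := by
          simp only [hwdef]
          norm_num
        rw [h1, hw1, smul_add, smul_smul, mul_one_div, div_self hcpos.ne', one_smul]
        have hphi1 : Phi A 1 0 (c • s 0 + u) = A 0 (Phi A 0 0 (c • s 0 + u)) := by
          have := phi_succ_apply A 0 (c • s 0 + u)
          simpa using this
        rw [hphi1, phi_zero]
        simp [map_add, map_smul]
      · intro kk hkk ih
        have hstep := hs1 kk
        have hwkk : w (kk+1) = 0 := by
          simp only [hwdef]
          rw [if_neg (by omega)]
        rw [hwkk, add_zero] at hstep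
        rw [hstep, ← map_smul, ih, ← phi_succ_apply]
    refine ⟨c • s 0 + u, ?_, -(c • s 0), ?_, by abel⟩
    · show Tendsto (fun k : ℤ => ‖Phi A k 0 (c • s 0 + u)‖) atTop (𝓝 0)
      have hM : ∀ k : ℤ, 0 ≤ k →
          ‖Phi A k 0 (c • s 0 + u)‖ ≤ max (c*(2*L)) ‖c • s 0 + u‖ := by
        intro k hk
        rcases eq_or_lt_of_le hk with he | hlt
        · rw [← he, phi_zero]
          calc ‖(1 : EuclideanSpace ℝ (Fin m) →L[ℝ] EuclideanSpace ℝ (Fin m)) (c • s 0 + u)‖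
              = ‖c • s 0 + u‖ := by rw [ContinuousLinearMap.one_apply]
          _ ≤ max (c*(2*L)) ‖c • s 0 + u‖ := le_max_right _ _
        · have h1 : Phi A k 0 (c • s 0 + u) = c • s k := (hfwd k (by omega)).symm
          rw [h1, norm_smul, Real.norm_eq_abs, abs_of_pos hcpos]
          calc c * ‖s k‖ ≤ c * (2*L) := mul_le_mul_of_nonneg_left (hs2 k) hcpos.le
          _ ≤ max (c*(2*L)) ‖c • s 0 + u‖ := le_max_left _ _
      exact decay_forward A (2*L) h2L hadm (c • s 0 + u) (max (c*(2*L)) ‖c • s 0 + u‖) hM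
    · show Tendsto (fun k : ℤ => ‖Phi A k 0 (-(c • s 0))‖) atBot (𝓝 0)
      have hM : ∀ k : ℤ, k ≤ 0 → ‖Phi A k 0 (-(c • s 0))‖ ≤ c*(2*L) := by
        intro k hk
        have h1 : Phi A k 0 (-(c • s 0)) = -(c • (Phi A k 0 (s 0))) := by
          rw [map_neg, map_smul]
        rw [h1, norm_neg, ← hback k hk, norm_smul, Real.norm_eq_abs, abs_of_pos hcpos]
        exact mul_le_mul_of_nonneg_left (hs2 k) hcpos.le
      exact decay_backward A (2*L) h2L hadm (-(c • s 0)) (c*(2*L)) hM
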